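/- (Theorem 3.1, normalization) If λ/μ < 1 and λe^{φ}/μ < 1, then the family (π(j,n)) indexed by j ∈ Λ and n : Λ → ℕ is summable and Σ_{j∈Λ} Σ_{n : Λ → ℕ} π(j,n) = 1; that is, π is a probability distribution on Λ × ℕ^Λ. -/

import Mathlib

set_option maxHeartbeats 1000000

open Finset

lemma pi_prod_hasSum_aux (ι : Type) [Finite ι] :
    ∀ (_ : Fintype ι) (g : ι → ℕ → ℝ),
      (∀ i k, 0 ≤ g i k) → (∀ i, Summable (g i)) →
      HasSum (fun n : ι → ℕ => ∏ i, g i (n i)) (∏ i, ∑' k, g i k) := by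
  refine Finite.induction_empty_option
    (P := fun α => ∀ (F : Fintype α) (g : α → ℕ → ℝ),
      (∀ i k, 0 ≤ g i k) → (∀ i, Summable (g i)) →
      HasSum (fun n : α → ℕ => ∏ i ∈ @Finset.univ α F, g i (n i))
        (∏ i ∈ @Finset.univ α F, ∑' k, g i k)) ?_ ?_ ?_ ι
  case refine_1 =>
      intro α β e ih F g hpos hsum
      letI : Fintype _ := Fintype.ofEquiv _ e.symm
      have H := ih inferInstance (fun i => g (e i)) (fun i k => hpos _ k)
        (fun i => hsum _)
      have hE : HasSum ((fun n => ∏ i, g i (n i)) ∘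
          (Equiv.arrowCongr e (Equiv.refl ℕ))) (∏ i, ∑' k, g (e i) k) := by
        convert H using 1
        funext m
        simp only [Function.comp_apply]
        rw [← Equiv.prod_comp e (fun i => g i ((Equiv.arrowCongr e (Equiv.refl ℕ)) m i))]
        refine Finset.prod_congr rfl fun i _ => ?_
        simp [Equiv.arrowCongr]
      have := (Equiv.hasSum_iff (Equiv.arrowCongr e (Equiv.refl ℕ))).mp hE
      convert this using 1
      rw [← Equiv.prod_comp e (fun i => ∑' k, g i k)]
  case refine_2 =>
      intro F g hpos hsum
      have : (fun n : PEmpty.{1} → ℕ => ∏ i, g i (n i)) = fun _ => 1 := by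
        funext n; simp
      rw [this]
      have : (∏ i, ∑' k, g i k : ℝ) = 1 := by simp
      rw [this]
      have h1 : HasSum (fun _ : PEmpty.{1} → ℕ => (1:ℝ)) ((fun _ : PEmpty.{1} → ℕ => (1:ℝ)) default) :=
        hasSum_single default (fun b hb => (hb (Subsingleton.elim b default)).elim)
      simpa using h1
  case refine_3 =>
      intro α _inst ih F g hpos hsum
      have hF : F = instFintypeOption := Subsingleton.elim _ _
      subst hF
      have H := ih inferInstance (fun i => g (some i)) (fun i k => hpos _ k) (fun i => hsum _)
      -- sum over Option α → ℕ via ℕ × (α → ℕ)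
      set e : (ℕ × (α → ℕ)) ≃ (Option α → ℕ) :=
        (Equiv.piOptionEquivProd (β := fun _ => ℕ)).symm
      have key : ((fun n : Option α → ℕ => ∏ i, g i (n i)) ∘ e) =
          fun p : ℕ × (α → ℕ) => g none p.1 * ∏ i, g (some i) (p.2 i) := by
        funext p
        simp only [Function.comp_apply, Fintype.prod_option]
        congr 1
      have hnorm1 : Summable fun k => ‖g none k‖ := by
        simpa [Real.norm_of_nonneg (hpos none _)] using hsum none
      have hnorm2 : Summable fun m : α → ℕ => ‖∏ i, g (some i) (m i)‖ := by
        have : ∀ m : α → ℕ, ‖∏ i, g (some i) (m i)‖ = ∏ i, g (some i) (m i) := fun m =>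
          Real.norm_of_nonneg (Finset.prod_nonneg fun i _ => hpos _ _)
        simpa [this] using H.summable
      have hsummable : Summable fun p : ℕ × (α → ℕ) =>
          g none p.1 * ∏ i, g (some i) (p.2 i) :=
        summable_mul_of_summable_norm hnorm1 hnorm2
      have htsum : (∑' k, g none k) * (∑' m : α → ℕ, ∏ i, g (some i) (m i)) =
          ∑' p : ℕ × (α → ℕ), g none p.1 * ∏ i, g (some i) (p.2 i) :=
        tsum_mul_tsum_of_summable_norm hnorm1 hnorm2
      have hS : HasSum (fun p : ℕ × (α → ℕ) => g none p.1 * ∏ i, g (some i) (p.2 i))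
          (∏ i, ∑' k, g i k) := by
        rw [Fintype.prod_option]
        have := hsummable.hasSum
        rw [← htsum] at this
        convert this using 2
        exact H.tsum_eq.symm
      rw [← key] at hS
      exact (Equiv.hasSum_iff e).mp hS


lemma pi_prod_hasSum {ι : Type v} [Fintype ι] (g : ι → ℕ → ℝ)
    (hpos : ∀ i k, 0 ≤ g i k) (hsum : ∀ i, Summable (g i)) :
    HasSum (fun n : ι → ℕ => ∏ i, g i (n i)) (∏ i, ∑' k, g i k) := by
  classical
  have e : ι ≃ Fin (Fintype.card ι) := Fintype.equivFin ι
  have H := pi_prod_hasSum_aux (Fin (Fintype.card ι)) inferInstance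
    (fun i => g (e.symm i)) (fun i k => hpos _ _) (fun i => hsum _)
  have hE : HasSum ((fun n : ι → ℕ => ∏ i, g i (n i)) ∘
      (Equiv.arrowCongr e.symm (Equiv.refl ℕ))) (∏ i, ∑' k, g (e.symm i) k) := by
    convert H using 1
    funext m
    simp only [Function.comp_apply]
    rw [← Equiv.prod_comp e.symm
      (fun i => g i ((Equiv.arrowCongr e.symm (Equiv.refl ℕ)) m i))]
    refine Finset.prod_congr rfl fun i _ => ?_
    simp [Equiv.arrowCongr]
  have := (Equiv.hasSum_iff (Equiv.arrowCongr e.symm (Equiv.refl ℕ))).mp hE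
  convert this using 1
  rw [← Equiv.prod_comp e.symm (fun i => ∑' k, g i k)]

/-- Theorem 3.1, normalization: under the sub-criticality conditions
`λ/μ < 1` and `λ e^φ/μ < 1`, the stationary probabilities `π(j,n)` form a
probability distribution on `Λ × ℕ^Λ`. -/
theorem rw_jackson_normalized
    (Λ : Type*) [Fintype Λ] [Nonempty Λ]
    (lam mu φ : ℝ) (hlam : 0 < lam) (hmu : 0 < mu)
    (hsub1 : lam / mu < 1) (hsub2 : lam * Real.exp φ / mu < 1)
    (π : Λ → (Λ → ℕ) → ℝ)
    (hπ : ∀ (j : Λ) (n : Λ → ℕ), π j n =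
      (Fintype.card Λ : ℝ)⁻¹ * (1 - lam * Real.exp φ / mu) *
        (1 - lam / mu) ^ (Fintype.card Λ - 1) *
        (lam / mu) ^ (∑ i, n i) * Real.exp (φ * n j)) :
    Summable (fun p : Λ × (Λ → ℕ) => π p.1 p.2) ∧
      ∑' p : Λ × (Λ → ℕ), π p.1 p.2 = 1 := by
  classical
  set c := Fintype.card Λ with hc
  have hcpos : 0 < c := Fintype.card_pos
  set r := lam / mu with hrdef
  set s := lam * Real.exp φ / mu with hsdef
  have hr0 : 0 ≤ r := div_nonneg hlam.le hmu.le
  have hs0 : 0 ≤ s := div_nonneg (mul_nonneg hlam.le (Real.exp_pos φ).le) hmu.le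
  have hsr : s = r * Real.exp φ := by
    rw [hsdef, hrdef]; ring
  set C : ℝ := (c : ℝ)⁻¹ * (1 - s) * (1 - r) ^ (c - 1) with hC
  have h1r : (0:ℝ) < 1 - r := by linarith
  have h1s : (0:ℝ) < 1 - s := by linarith
  -- geometric factors
  set g : Λ → Λ → ℕ → ℝ := fun j i k => (if i = j then s else r) ^ k with hg
  have hgpos : ∀ j i k, 0 ≤ g j i k := by
    intro j i k
    simp only [hg]
    split <;> positivity
  have hgsum : ∀ j i, Summable (g j i) := by
    intro j i
    simp only [hg]
    split
    · exact summable_geometric_of_lt_one hs0 hsub2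
    · exact summable_geometric_of_lt_one hr0 hsub1
  have hprod : ∀ (j : Λ) (n : Λ → ℕ), π j n = C * ∏ i, g j i (n i) := by
    intro j n
    have step : ∀ i, g j i (n i) = r ^ (n i) * (if i = j then Real.exp φ ^ (n i) else 1) := by
      intro i
      simp only [hg]
      split
      · rw [hsr, mul_pow]
      · rw [mul_one]
    calc π j n = C * (r ^ (∑ i, n i) * Real.exp (φ * n j)) := by
          rw [hπ]; ring
      _ = C * ∏ i, g j i (n i) := by
          congr 1
          rw [Finset.prod_congr rfl (fun i _ => step i), Finset.prod_mul_distrib,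
            Finset.prod_pow_eq_pow_sum]
          congr 1
          · rw [Finset.prod_ite_eq' Finset.univ j (fun i => Real.exp φ ^ (n i))]
            simp [mul_comm φ (n j : ℝ), Real.exp_nat_mul]
  have hgeom : ∀ j : Λ, (∏ i, ∑' k, g j i k) = (1 - s)⁻¹ * (1 - r)⁻¹ ^ (c - 1) := by
    intro j
    have hval : ∀ i, (∑' k, g j i k) = if i = j then (1 - s)⁻¹ else (1 - r)⁻¹ := by
      intro i
      simp only [hg]
      split
      · exact tsum_geometric_of_lt_one hs0 hsub2
      · exact tsum_geometric_of_lt_one hr0 hsub1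
    rw [Finset.prod_congr rfl (fun i _ => hval i),
      ← Finset.mul_prod_erase Finset.univ _ (Finset.mem_univ j)]
    simp only [if_pos rfl]
    congr 1
    rw [Finset.prod_congr rfl (fun i hi => if_neg (Finset.ne_of_mem_erase hi)),
      Finset.prod_const, Finset.card_erase_of_mem (Finset.mem_univ j), Finset.card_univ]
  have hfiber : ∀ j : Λ, HasSum (fun n : Λ → ℕ => π j n) ((c : ℝ)⁻¹) := by
    intro j
    have H := (pi_prod_hasSum (g j) (hgpos j) (hgsum j)).mul_left C
    have hval : C * (∏ i, ∑' k, g j i k) = (c : ℝ)⁻¹ := by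
      rw [hgeom j, hC]
      field_simp
      rw [← mul_pow, mul_one_div_cancel h1r.ne', one_pow]
    rw [hval] at H
    simpa only [← hprod j] using H
  have hnn : ∀ p : Λ × (Λ → ℕ), 0 ≤ π p.1 p.2 := by
    intro p
    rw [hprod]
    have : 0 ≤ C := by
      rw [hC]; positivity
    exact mul_nonneg this (Finset.prod_nonneg fun i _ => hgpos _ _ _)
  have hsummable : Summable (fun p : Λ × (Λ → ℕ) => π p.1 p.2) := by
    rw [summable_prod_of_nonneg hnn]
    exact ⟨fun j => (hfiber j).summable, Summable.of_finite⟩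
  refine ⟨hsummable, ?_⟩
  rw [Summable.tsum_prod' hsummable (fun j => (hfiber j).summable)]
  have : ∀ j : Λ, (∑' n : Λ → ℕ, π j n) = (c : ℝ)⁻¹ := fun j => (hfiber j).tsum_eq
  rw [tsum_congr this, tsum_fintype]
  simp only [Finset.sum_const, Finset.card_univ, nsmul_eq_mul, ← hc]
  field_simp
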